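/- arXiv:1405.0952 — 3 statements merged into one kernel-verified Lean document; each statement's English description precedes it below -/
import Mathlib

section
/- Let M be the (n−1)×(n−1) matrix whose (i,j) entry is the 2-form dz_i ∧ dz̄_j (entries of dS ∧ dS*). Then the (n−1)-th matrix power M^{n−1}, computed in the algebra of matrices over the exterior algebra, equals (n−2)! · (−1)^{n−2} · (dz_1 ∧ dz̄_1 ∧ ⋯ ∧ dz_{n−1} ∧ dz̄_{n−1}) · Id, for every n ≥ 2. -/
open Finset

section aux

variable {A : Type*} [Ring A] {m : ℕ} (ω : Fin m → A)

private def auxP (hcomm : ∀ i j, Commute (ω i) (ω j)) (S : Finset (Fin m)) : A :=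
  S.noncommProd ω fun i _ j _ _ => hcomm i j

variable (hcomm : ∀ i j, Commute (ω i) (ω j))

private lemma auxP_insert {l : Fin m} {S : Finset (Fin m)} (hl : l ∉ S) :
    auxP ω hcomm (insert l S) = ω l * auxP ω hcomm S :=
  Finset.noncommProd_insert_of_notMem _ _ _ _ hl

private lemma auxP_insert' {l : Fin m} {S : Finset (Fin m)} (hl : l ∉ S) :
    auxP ω hcomm (insert l S) = auxP ω hcomm S * ω l :=
  Finset.noncommProd_insert_of_notMem' _ _ _ _ hl

private lemma mul_auxP_of_mem (hsq : ∀ i, ω i * ω i = 0) {l : Fin m} {S : Finset (Fin m)}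
    (hl : l ∈ S) : ω l * auxP ω hcomm S = 0 := by
  rw [← Finset.insert_erase hl, auxP_insert ω hcomm (Finset.notMem_erase _ _), ← mul_assoc,
    hsq, zero_mul]

private def auxE (k : ℕ) : A :=
  ∑ S ∈ powersetCard k (univ : Finset (Fin m)), auxP ω hcomm S

private lemma reindex (f : Finset (Fin m) → A) (k : ℕ) :
    ∑ S ∈ powersetCard k (univ : Finset (Fin m)), ∑ l ∈ Sᶜ, f (insert l S)
      = ∑ S ∈ powersetCard (k + 1) (univ : Finset (Fin m)), ∑ _l ∈ S, f S := by
  rw [Finset.sum_sigma', Finset.sum_sigma']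
  refine Finset.sum_nbij' (fun p => ⟨insert p.2 p.1, p.2⟩) (fun p => ⟨p.1.erase p.2, p.2⟩)
    ?_ ?_ ?_ ?_ ?_
  · rintro ⟨S, l⟩ hp
    simp only [Finset.mem_sigma, Finset.mem_powersetCard_univ, Finset.mem_compl] at hp ⊢
    exact ⟨by rw [Finset.card_insert_of_notMem hp.2, hp.1], Finset.mem_insert_self _ _⟩
  · rintro ⟨S, l⟩ hp
    simp only [Finset.mem_sigma, Finset.mem_powersetCard_univ, Finset.mem_compl] at hp ⊢
    exact ⟨by simp [Finset.card_erase_of_mem hp.2, hp.1], Finset.notMem_erase _ _⟩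
  · rintro ⟨S, l⟩ hp
    simp only [Finset.mem_sigma, Finset.mem_powersetCard_univ, Finset.mem_compl] at hp
    dsimp only
    rw [Finset.erase_insert hp.2]
  · rintro ⟨S, l⟩ hp
    simp only [Finset.mem_sigma, Finset.mem_powersetCard_univ, Finset.mem_compl] at hp
    dsimp only
    rw [Finset.insert_erase hp.2]
  · rintro ⟨S, l⟩ _
    rfl

private lemma sum_mul_auxE (hsq : ∀ i, ω i * ω i = 0) (k : ℕ) :
    (∑ l, ω l) * auxE ω hcomm k = (k + 1) • auxE ω hcomm (k + 1) := by
  rw [auxE, Finset.sum_mul_sum, Finset.sum_comm]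
  have step : ∀ S ∈ powersetCard k (univ : Finset (Fin m)),
      ∑ l, ω l * auxP ω hcomm S = ∑ l ∈ Sᶜ, auxP ω hcomm (insert l S) := by
    intro S _
    rw [← Finset.sum_subset (Finset.subset_univ Sᶜ)
      (fun l _ hl => mul_auxP_of_mem ω hcomm hsq (by simpa using hl))]
    exact Finset.sum_congr rfl fun l hl =>
      (auxP_insert ω hcomm (Finset.mem_compl.mp hl)).symm
  rw [Finset.sum_congr rfl step, reindex, auxE, Finset.smul_sum]
  refine Finset.sum_congr rfl fun S hS => ?_
  rw [Finset.sum_const, Finset.mem_powersetCard_univ.mp hS]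

private lemma sum_pow_eq (hsq : ∀ i, ω i * ω i = 0) (k : ℕ) :
    (∑ l, ω l) ^ k = k.factorial • auxE ω hcomm k := by
  induction k with
  | zero =>
    simp [auxE, auxP]
    exact (Finset.noncommProd_empty _ _).symm
  | succ k ih =>
    rw [pow_succ', ih, mul_smul_comm, sum_mul_auxE ω hcomm hsq, smul_smul,
      Nat.factorial_succ, mul_comm]

end aux

section key

variable {A : Type*} [Ring A] {m : ℕ}

private lemma key (x y : Fin m → A)
    (hxx : ∀ i j, x i * x j = -(x j * x i))
    (hyy : ∀ i j, y i * y j = -(y j * y i))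
    (hxy : ∀ i j, x i * y j = -(y j * x i))
    (hx0 : ∀ i, x i * x i = 0) (hy0 : ∀ i, y i * y i = 0)
    (M : Matrix (Fin m) (Fin m) A) (hM : ∀ i j, M i j = x i * y j) (k : ℕ) (hk : k + 1 = m) :
    M ^ m = Matrix.diagonal (fun _ =>
      ((k.factorial : ℤ) * (-1 : ℤ) ^ k) • (List.ofFn fun i => x i * y i).prod) := by
  set ω : Fin m → A := fun i => x i * y i with hω
  have hyx : ∀ i j, y i * x j = -(x j * y i) := fun i j =>
    neg_eq_iff_eq_neg.mp (hxy j i).symm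
  have hωx : ∀ i j, ω i * x j = x j * ω i := by
    intro i j
    calc ω i * x j = x i * (y i * x j) := by rw [hω]; noncomm_ring
      _ = x i * -(x j * y i) := by rw [hyx]
      _ = -(x i * x j) * y i := by noncomm_ring
      _ = x j * x i * y i := by rw [hxx, neg_neg]
      _ = x j * ω i := by rw [hω]; noncomm_ring
  have hωy : ∀ i j, ω i * y j = y j * ω i := by
    intro i j
    calc ω i * y j = x i * (y i * y j) := by rw [hω]; noncomm_ring
      _ = x i * -(y j * y i) := by rw [hyy]
      _ = -(x i * y j) * y i := by noncomm_ring
      _ = y j * x i * y i := by rw [hxy, neg_neg]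
      _ = y j * ω i := by rw [hω]; noncomm_ring
  have hcomm : ∀ i j, Commute (ω i) (ω j) := by
    intro i j
    show ω i * ω j = ω j * ω i
    calc ω i * ω j = (ω i * x j) * y j := by rw [hω]; noncomm_ring
      _ = x j * (ω i * y j) := by rw [hωx]; noncomm_ring
      _ = x j * (y j * ω i) := by rw [hωy]
      _ = ω j * ω i := by rw [hω]; noncomm_ring
  have hxω : ∀ i, x i * ω i = 0 := by
    intro i
    rw [hω]
    show x i * (x i * y i) = 0
    rw [← mul_assoc, hx0, zero_mul]
  have hωy0 : ∀ i, ω i * y i = 0 := by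
    intro i
    rw [hω]
    show x i * y i * y i = 0
    rw [mul_assoc, hy0, mul_zero]
  have hsq : ∀ i, ω i * ω i = 0 := by
    intro i
    rw [hω]
    show x i * y i * (x i * y i) = 0
    calc x i * y i * (x i * y i) = x i * (y i * x i) * y i := by noncomm_ring
      _ = x i * -(x i * y i) * y i := by rw [hyx]
      _ = -(x i * x i * (y i * y i)) := by noncomm_ring
      _ = 0 := by rw [hx0, zero_mul, neg_zero]
  set s : A := ∑ l, y l * x l with hs
  have hMpow : ∀ (c : ℕ) i j, (M ^ (c + 1)) i j = x i * s ^ c * y j := by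
    intro c
    induction c with
    | zero =>
      intro i j
      rw [zero_add, pow_one, hM, pow_zero, mul_one]
    | succ c ih =>
      intro i j
      rw [pow_succ, Matrix.mul_apply]
      calc ∑ l, (M ^ (c + 1)) i l * M l j
          = ∑ l, x i * s ^ c * (y l * x l) * y j := by
            refine Finset.sum_congr rfl fun l _ => ?_
            rw [ih, hM]; noncomm_ring
        _ = (∑ l, x i * s ^ c * (y l * x l)) * y j := by rw [Finset.sum_mul]
        _ = x i * s ^ c * (∑ l, y l * x l) * y j := by rw [Finset.mul_sum]
        _ = x i * s ^ (c + 1) * y j := by rw [← hs, pow_succ, ← mul_assoc]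
  have hsT : s = -(∑ l, ω l) := by
    rw [hs, ← Finset.sum_neg_distrib]
    exact Finset.sum_congr rfl fun l _ => by rw [hyx]
  have hxP : ∀ (i : Fin m) (S : Finset (Fin m)), i ∈ S → x i * auxP ω hcomm S = 0 := by
    intro i S hi
    rw [← Finset.insert_erase hi, auxP_insert ω hcomm (Finset.notMem_erase _ _), ← mul_assoc,
      hxω, zero_mul]
  have hPy : ∀ (j : Fin m) (S : Finset (Fin m)), j ∈ S → auxP ω hcomm S * y j = 0 := by
    intro j S hj
    rw [← Finset.insert_erase hj, auxP_insert' ω hcomm (Finset.notMem_erase _ _), mul_assoc,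
      hωy0, mul_zero]
  have hxPcomm : ∀ (i : Fin m) (S : Finset (Fin m)),
      x i * auxP ω hcomm S = auxP ω hcomm S * x i := by
    intro i S
    exact Finset.noncommProd_commute _ _ _ _ fun l _ => (hωx l i).symm
  have hPuniv : auxP ω hcomm (univ : Finset (Fin m)) = (List.ofFn fun i => x i * y i).prod := by
    rw [auxP]
    unfold Finset.noncommProd
    rw [Fin.univ_def, List.ofFn_eq_map]
    exact Multiset.noncommProd_coe _ _
  -- main entry computation
  have hEntry : ∀ i j, (M ^ m) i j =
      (if i = j then ((k.factorial : ℤ) * (-1 : ℤ) ^ k) • (List.ofFn fun i => x i * y i).prod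
       else 0) := by
    intro i j
    have hcards : (univ : Finset (Fin m)).card = k + 1 := by simp [hk]
    have hT : x i * ((-1 : A) ^ k * k.factorial •
          ∑ S ∈ powersetCard k (univ : Finset (Fin m)), auxP ω hcomm S) * y j
        = k.factorial • ((-1 : A) ^ k *
          ∑ S ∈ powersetCard k (univ : Finset (Fin m)), x i * auxP ω hcomm S * y j) := by
      rw [mul_smul_comm, mul_smul_comm, smul_mul_assoc]
      congr 1
      simp only [Finset.mul_sum, Finset.sum_mul]
      refine Finset.sum_congr rfl fun S _ => ?_
      have hc := ((Commute.neg_one_left (x i)).pow_left k).eq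
      calc x i * ((-1 : A) ^ k * auxP ω hcomm S) * y j
          = (x i * (-1 : A) ^ k) * (auxP ω hcomm S * y j) := by noncomm_ring
        _ = ((-1 : A) ^ k * x i) * (auxP ω hcomm S * y j) := by rw [← hc]
        _ = (-1 : A) ^ k * (x i * auxP ω hcomm S * y j) := by noncomm_ring
    rw [show M ^ m = M ^ (k + 1) from by rw [hk], hMpow k i j, hsT, neg_pow,
      sum_pow_eq ω hcomm hsq k, auxE, hT]
    by_cases hij : i = j
    · subst hij
      simp only [if_pos rfl]
      have hmem : univ.erase i ∈ powersetCard k (univ : Finset (Fin m)) := by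
        rw [Finset.mem_powersetCard_univ, Finset.card_erase_of_mem (Finset.mem_univ i), hcards]
        omega
      have hsingle : ∑ S ∈ powersetCard k (univ : Finset (Fin m)), x i * auxP ω hcomm S * y i
          = (List.ofFn fun i => x i * y i).prod := by
        rw [Finset.sum_eq_single (univ.erase i)]
        · rw [hxPcomm, mul_assoc]
          show auxP ω hcomm (univ.erase i) * ω i = _
          rw [← auxP_insert' ω hcomm (Finset.notMem_erase i univ),
            Finset.insert_erase (Finset.mem_univ i), hPuniv]
        · intro S hS hSne
          have hiS : i ∈ S := by
            by_contra hiS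
            exact hSne (Finset.eq_of_subset_of_card_le
              (Finset.subset_erase.mpr ⟨Finset.subset_univ S, hiS⟩)
              (by rw [Finset.mem_powersetCard_univ.mp hS,
                Finset.card_erase_of_mem (Finset.mem_univ i), hcards]; omega))
          rw [hxP i S hiS, zero_mul]
        · intro h
          exact absurd hmem h
      rw [hsingle, zsmul_eq_mul, nsmul_eq_mul]
      push_cast
      noncomm_ring
    · simp only [if_neg hij]
      have hzero : ∀ S ∈ powersetCard k (univ : Finset (Fin m)),
          x i * auxP ω hcomm S * y j = 0 := by
        intro S hS
        by_cases hiS : i ∈ S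
        · rw [hxP i S hiS, zero_mul]
        · have hjS : j ∈ S := by
            have huniv : insert i S = univ := Finset.eq_of_subset_of_card_le
              (Finset.subset_univ _)
              (by rw [Finset.card_insert_of_notMem hiS, Finset.mem_powersetCard_univ.mp hS,
                hcards])
            have : j ∈ insert i S := huniv ▸ Finset.mem_univ j
            rcases Finset.mem_insert.mp this with h | h
            · exact absurd h.symm hij
            · exact h
          rw [mul_assoc, hPy j S hjS, mul_zero]
      rw [Finset.sum_eq_zero hzero, mul_zero, smul_zero]
  ext i j
  rw [hEntry i j, Matrix.diagonal]
  by_cases hij : i = j <;> simp [hij, Matrix.of_apply, hω]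

end key

/-- Let `M` be the `(n−1)×(n−1)` matrix of 2-forms `M i j = dz_i ∧ dz̄_j` (the entries of
`dS ∧ dS*`). For `n ≥ 2`, the matrix power `M^(n−1)`, computed over the exterior algebra,
equals `(n−2)! · (−1)^(n−2) · (dz_1 ∧ dz̄_1 ∧ ⋯ ∧ dz_{n−1} ∧ dz̄_{n−1}) · Id`. -/
theorem stmt4 (n : ℕ) (hn : 2 ≤ n) {V : Type*} [AddCommGroup V] [Module ℂ V]
    (dz dzbar : Fin (n - 1) → V)
    (M : Matrix (Fin (n - 1)) (Fin (n - 1)) (ExteriorAlgebra ℂ V))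
    (hM : ∀ i j, M i j = ExteriorAlgebra.ι ℂ (dz i) * ExteriorAlgebra.ι ℂ (dzbar j)) :
    M ^ (n - 1) =
      Matrix.diagonal (fun _ =>
        (((n - 2).factorial : ℂ) * (-1 : ℂ) ^ (n - 2)) •
          (List.ofFn fun i : Fin (n - 1) =>
            ExteriorAlgebra.ι ℂ (dz i) * ExteriorAlgebra.ι ℂ (dzbar i)).prod) := by
  have hanti : ∀ u v : V, ExteriorAlgebra.ι ℂ u * ExteriorAlgebra.ι ℂ v
      = -(ExteriorAlgebra.ι ℂ v * ExteriorAlgebra.ι ℂ u) := fun u v =>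
    eq_neg_of_add_eq_zero_left (ExteriorAlgebra.ι_add_mul_swap u v)
  have hk : (n - 2) + 1 = n - 1 := by omega
  have := key (fun i => ExteriorAlgebra.ι ℂ (dz i)) (fun i => ExteriorAlgebra.ι ℂ (dzbar i))
    (fun i j => hanti _ _) (fun i j => hanti _ _) (fun i j => hanti _ _)
    (fun i => ExteriorAlgebra.ι_sq_zero _) (fun i => ExteriorAlgebra.ι_sq_zero _)
    M hM (n - 2) hk
  rw [this]
  funext _
  rw [← Int.cast_smul_eq_zsmul ℂ]
  push_cast
  ring_nf
end

section
/- With φ(t,U) = (tanh(t)I + U)(I + tanh(t)U)⁻¹ as above, for every unitary U and every vector v: if (I + U)v = 0 then lim_{t→∞} φ(t,U)v = −v, and if v is orthogonal to Ker(I + U) then lim_{t→∞} φ(t,U)v = v. Dually, if (I − U)v = 0 then lim_{t→−∞} φ(t,U)v = v, and if v ⟂ Ker(I − U) then lim_{t→−∞} φ(t,U)v = −v. -/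
open Matrix Filter

section Aux

lemma auxTanh_eq' (t : ℝ) : Real.tanh t = 1 - 2 / (Real.exp (2*t) + 1) := by
  have h1 : Real.cosh t ≠ 0 := ne_of_gt (Real.cosh_pos t)
  have h2 : Real.exp (2*t) + 1 ≠ 0 := by positivity
  rw [Real.tanh_eq_sinh_div_cosh, Real.sinh_eq, Real.cosh_eq, two_mul, Real.exp_add]
  have h3 : Real.exp t ≠ 0 := Real.exp_ne_zero t
  field_simp
  ring_nf
  rw [Real.exp_neg]
  field_simp
  ring

lemma auxTanh_mem : ∀ t : ℝ, Real.tanh t ∈ Set.Ioo (-1:ℝ) 1 := by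
  intro t
  rw [auxTanh_eq']
  constructor
  · have : 2 / (Real.exp (2*t) + 1) < 2 := by
      rw [div_lt_iff₀ (by positivity)]
      nlinarith [Real.exp_pos (2*t)]
    linarith
  · have : 0 < 2 / (Real.exp (2*t) + 1) := by positivity
    linarith

lemma auxTanh_top : Tendsto Real.tanh atTop (nhds 1) := by
  have : Tendsto (fun t : ℝ => 1 - 2 / (Real.exp (2*t) + 1)) atTop (nhds 1) := by
    have h : Tendsto (fun t : ℝ => Real.exp (2*t) + 1) atTop atTop :=
      (Real.tendsto_exp_atTop.comp (tendsto_id.const_mul_atTop two_pos)).atTop_add tendsto_const_nhds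
    have := (tendsto_const_nhds (x := (2:ℝ))).div_atTop h
    simpa using (tendsto_const_nhds (x := (1:ℝ))).sub this
  exact this.congr (fun t => (auxTanh_eq' t).symm)

lemma auxTanh_bot : Tendsto Real.tanh atBot (nhds (-1)) := by
  have : Tendsto (fun t : ℝ => 1 - 2 / (Real.exp (2*t) + 1)) atBot (nhds (-1)) := by
    have h : Tendsto (fun t : ℝ => Real.exp (2*t) + 1) atBot (nhds 1) := by
      have h2 : Tendsto (fun t : ℝ => (2*t)) atBot atBot := tendsto_const_mul_atBot_of_pos two_pos |>.2 tendsto_id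
      have := Real.tendsto_exp_atBot.comp h2
      simpa using this.add tendsto_const_nhds
    have := ((tendsto_const_nhds (x := (2:ℝ))).div h (by norm_num))
    have h3 := (tendsto_const_nhds (x := (1:ℝ))).sub this
    norm_num at h3
    convert h3 using 2
  exact this.congr (fun t => (auxTanh_eq' t).symm)

noncomputable def toE {n : ℕ} (x : Fin n → ℂ) : EuclideanSpace ℂ (Fin n) :=
  (WithLp.equiv 2 (Fin n → ℂ)).symm x

variable {n : ℕ}

lemma toE_eq_zero {x : Fin n → ℂ} : toE x = 0 ↔ x = 0 := WithLp.toLp_eq_zero 2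

lemma toEuclideanLin_toE (A : Matrix (Fin n) (Fin n) ℂ) (x : Fin n → ℂ) :
    Matrix.toEuclideanLin A (toE x) = toE (A.mulVec x) := rfl

lemma norm_mulVec_unitary (U : Matrix (Fin n) (Fin n) ℂ)
    (hU : U ∈ Matrix.unitaryGroup (Fin n) ℂ) (x : Fin n → ℂ) :
    ‖toE (U.mulVec x)‖ = ‖toE x‖ := by
  have h : Uᴴ * U = 1 := by
    simpa [Matrix.star_eq_conjTranspose] using hU.1
  have h1 : (inner ℂ (toE (U.mulVec x)) (toE (U.mulVec x)) : ℂ) = inner ℂ (toE x) (toE x) := by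
    show (U.mulVec x) ⬝ᵥ star (U.mulVec x) = x ⬝ᵥ star x
    rw [dotProduct_comm, dotProduct_comm x]
    rw [Matrix.star_mulVec, ← Matrix.dotProduct_mulVec, Matrix.mulVec_mulVec, h,
      Matrix.one_mulVec]
  rw [@norm_eq_sqrt_re_inner ℂ, @norm_eq_sqrt_re_inner ℂ, h1]

lemma det_isUnit (U : Matrix (Fin n) (Fin n) ℂ)
    (hU : U ∈ Matrix.unitaryGroup (Fin n) ℂ) {s : ℝ} (hs : |s| < 1) :
    IsUnit (1 + (s:ℂ) • U).det := by
  by_contra hdet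
  rw [isUnit_iff_ne_zero, not_not] at hdet
  obtain ⟨x, hx0, hx⟩ := (Matrix.exists_mulVec_eq_zero_iff).mpr hdet
  have hx1 : x + (s:ℂ) • U.mulVec x = 0 := by
    rw [← hx, Matrix.add_mulVec, Matrix.one_mulVec, Matrix.smul_mulVec]
  have hx2 : x = -((s:ℂ) • U.mulVec x) := by linear_combination hx1
  have : ‖toE x‖ = |s| * ‖toE x‖ := by
    conv_lhs => rw [hx2]
    have : toE (-((s:ℂ) • U.mulVec x)) = -((s:ℂ) • toE (U.mulVec x)) := rfl
    rw [this, norm_neg, norm_smul, norm_mulVec_unitary U hU]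
    simp
  have hxn : 0 < ‖toE x‖ := by
    rw [norm_pos_iff]
    exact fun h => hx0 (toE_eq_zero.mp h)
  nlinarith

lemma eigen_case (U : Matrix (Fin n) (Fin n) ℂ)
    (hU : U ∈ Matrix.unitaryGroup (Fin n) ℂ) (v : Fin n → ℂ)
    (hv : ((1 : Matrix (Fin n) (Fin n) ℂ) + U).mulVec v = 0)
    {s : ℝ} (hs : s ∈ Set.Ioo (-1:ℝ) 1) :
    ((s • (1 : Matrix (Fin n) (Fin n) ℂ) + U) * (1 + s • U)⁻¹).mulVec v = -v := by
  have hsmul : ∀ A : Matrix (Fin n) (Fin n) ℂ, s • A = (s:ℂ) • A := by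
    intro A; ext i j; simp [Matrix.smul_apply, Complex.real_smul]
  have habs : |s| < 1 := abs_lt.mpr ⟨hs.1, hs.2⟩
  have hdet := det_isUnit U hU habs
  have hUv : U.mulVec v = -v := by
    have : v + U.mulVec v = 0 := by
      rw [← hv, Matrix.add_mulVec, Matrix.one_mulVec]
    linear_combination this
  set M := 1 + (s:ℂ) • U with hM
  have hs1 : (1:ℂ) - (s:ℂ) ≠ 0 := by
    intro h
    have : (s:ℂ) = 1 := by linear_combination -h
    exact absurd (by exact_mod_cast this) (ne_of_lt hs.2)
  have hMv : M.mulVec v = ((1:ℂ) - s) • v := by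
    rw [hM, Matrix.add_mulVec, Matrix.one_mulVec, Matrix.smul_mulVec, hUv, sub_smul,
      one_smul, smul_neg]
    rfl
  have hinv : M⁻¹.mulVec v = ((1:ℂ) - s)⁻¹ • v := by
    have h1 : M.mulVec (((1:ℂ) - s)⁻¹ • v) = v := by
      rw [Matrix.mulVec_smul, hMv, smul_smul, inv_mul_cancel₀ hs1, one_smul]
    have h2 := congrArg (fun y => M⁻¹.mulVec y) h1
    symm
    simpa [Matrix.mulVec_mulVec, Matrix.nonsing_inv_mul M hdet, Matrix.one_mulVec] using h2
  rw [hsmul, hsmul, ← Matrix.mulVec_mulVec, hinv, Matrix.mulVec_smul, Matrix.add_mulVec,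
    Matrix.smul_mulVec, Matrix.one_mulVec, hUv]
  funext i
  simp only [Pi.smul_apply, Pi.add_apply, Pi.neg_apply, smul_eq_mul]
  field_simp
  ring

lemma exists_eps (U : Matrix (Fin n) (Fin n) ℂ) :
    ∃ ε > (0:ℝ), ∀ x : Fin n → ℂ,
      (∀ w : Fin n → ℂ, ((1 : Matrix (Fin n) (Fin n) ℂ) + U).mulVec w = 0 → star w ⬝ᵥ x = 0) →
      ε * ‖toE x‖ ≤ ‖toE (((1 : Matrix (Fin n) (Fin n) ℂ) + U).mulVec x)‖ := by
  set f := Matrix.toEuclideanLin ((1 : Matrix (Fin n) (Fin n) ℂ) + U) with hf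
  set K := LinearMap.ker f with hK
  set g := f.domRestrict Kᗮ with hg
  have hker : LinearMap.ker g = ⊥ := by
    rw [LinearMap.ker_eq_bot]
    intro a b hab
    have ha : (a : EuclideanSpace ℂ (Fin n)) - b ∈ Kᗮ := sub_mem a.2 b.2
    have hb : (a : EuclideanSpace ℂ (Fin n)) - b ∈ K := by
      have : (a : EuclideanSpace ℂ (Fin n)) - b ∈ LinearMap.ker f := by
        rw [LinearMap.mem_ker, map_sub, sub_eq_zero]
        exact hab
      exact this
    have := Submodule.inner_right_of_mem_orthogonal hb ha
    have h0 : (a : EuclideanSpace ℂ (Fin n)) - b = 0 := by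
      rwa [inner_self_eq_zero] at this
    exact Subtype.ext (by rwa [sub_eq_zero] at h0)
  obtain ⟨C, hC, hCa⟩ := g.exists_antilipschitzWith hker
  refine ⟨(C:ℝ)⁻¹, by positivity, fun x hx => ?_⟩
  have hmem : toE x ∈ Kᗮ := by
    rw [Submodule.mem_orthogonal]
    intro u hu
    have hu' : ((1 : Matrix (Fin n) (Fin n) ℂ) + U).mulVec (WithLp.equiv 2 _ u) = 0 := by
      have : f u = 0 := hu
      rw [hf] at this
      have h2 : toE (((1 : Matrix (Fin n) (Fin n) ℂ) + U).mulVec (WithLp.equiv 2 _ u)) = 0 := by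
        rw [← toEuclideanLin_toE]; exact this
      exact toE_eq_zero.mp h2
    rw [EuclideanSpace.inner_eq_star_dotProduct, dotProduct_comm]
    exact hx _ hu'
  have h1 : ‖(⟨toE x, hmem⟩ : Kᗮ)‖ ≤ C * ‖g ⟨toE x, hmem⟩‖ := by
    have := hCa.le_mul_dist (⟨toE x, hmem⟩ : Kᗮ) 0
    simpa [dist_eq_norm] using this
  have h2 : g ⟨toE x, hmem⟩ = toE (((1 : Matrix (Fin n) (Fin n) ℂ) + U).mulVec x) := by
    rw [hg]; exact toEuclideanLin_toE _ _
  rw [h2] at h1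
  have h3 : ‖(⟨toE x, hmem⟩ : Kᗮ)‖ = ‖toE x‖ := rfl
  rw [h3] at h1
  rw [inv_mul_le_iff₀ (by positivity)]
  linarith [h1]

lemma key_s9 (U : Matrix (Fin n) (Fin n) ℂ)
    (hU : U ∈ Matrix.unitaryGroup (Fin n) ℂ) (v : Fin n → ℂ)
    (hv : ∀ w : Fin n → ℂ, ((1 : Matrix (Fin n) (Fin n) ℂ) + U).mulVec w = 0 → star v ⬝ᵥ w = 0)
    {l : Filter ℝ} {c : ℝ → ℝ} (hc1 : ∀ t, c t ∈ Set.Ioo (-1:ℝ) 1)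
    (hc2 : Tendsto c l (nhds 1)) :
    Tendsto (fun t => ((c t • (1 : Matrix (Fin n) (Fin n) ℂ) + U) * (1 + c t • U)⁻¹).mulVec v)
      l (nhds v) := by
  obtain ⟨ε, hε, hbd⟩ := exists_eps U
  have hsmul : ∀ (s : ℝ) (A : Matrix (Fin n) (Fin n) ℂ), s • A = (s:ℂ) • A := by
    intro s A; ext i j; simp [Matrix.smul_apply, Complex.real_smul]
  set F := fun t => ((c t • (1 : Matrix (Fin n) (Fin n) ℂ) + U) * (1 + c t • U)⁻¹).mulVec v
    with hF
  set w := fun t => ((1 : Matrix (Fin n) (Fin n) ℂ) + (c t : ℂ) • U)⁻¹.mulVec v with hw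
  -- per-t basic facts
  have habs : ∀ t, |c t| < 1 := fun t => abs_lt.mpr ⟨(hc1 t).1, (hc1 t).2⟩
  have hdet : ∀ t, IsUnit ((1 : Matrix (Fin n) (Fin n) ℂ) + (c t : ℂ) • U).det :=
    fun t => det_isUnit U hU (habs t)
  have hMw : ∀ t, ((1 : Matrix (Fin n) (Fin n) ℂ) + (c t : ℂ) • U).mulVec (w t) = v := by
    intro t
    rw [hw, Matrix.mulVec_mulVec, Matrix.mul_nonsing_inv _ (hdet t), Matrix.one_mulVec]
  -- orthogonality of w t
  have horth : ∀ t, ∀ y : Fin n → ℂ,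
      ((1 : Matrix (Fin n) (Fin n) ℂ) + U).mulVec y = 0 → star y ⬝ᵥ w t = 0 := by
    intro t y hy
    have hUy : U.mulVec y = -y := by
      have : y + U.mulVec y = 0 := by rw [← hy, Matrix.add_mulVec, Matrix.one_mulVec]
      linear_combination this
    have hUHy : Uᴴ.mulVec y = -y := by
      have h1 : Uᴴ * U = 1 := by simpa [Matrix.star_eq_conjTranspose] using hU.1
      have h2 : Uᴴ.mulVec (U.mulVec y) = y := by
        rw [Matrix.mulVec_mulVec, h1, Matrix.one_mulVec]
      rw [hUy] at h2
      rw [Matrix.mulVec_neg] at h2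
      linear_combination -h2
    set M := (1 : Matrix (Fin n) (Fin n) ℂ) + (c t : ℂ) • U with hM
    have hMH : Mᴴ.mulVec y = ((1:ℂ) - (c t : ℂ)) • y := by
      rw [hM, Matrix.conjTranspose_add, Matrix.conjTranspose_one, Matrix.conjTranspose_smul,
        Matrix.add_mulVec, Matrix.one_mulVec, Matrix.smul_mulVec, hUHy]
      simp [sub_smul, smul_neg]
      module
    have hyv : star y ⬝ᵥ v = 0 := by
      have := hv y hy
      have h2 := congrArg star this
      rwa [Matrix.star_dotProduct, star_star, star_zero] at h2
    have hcompute : star y ⬝ᵥ v = ((1:ℂ) - (c t : ℂ)) * (star y ⬝ᵥ w t) := by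
      rw [← hMw t, Matrix.dotProduct_mulVec]
      have : star y ᵥ* M = star (Mᴴ.mulVec y) := by
        rw [Matrix.star_mulVec, Matrix.conjTranspose_conjTranspose]
      rw [this, hMH]
      have : star (((1:ℂ) - (c t : ℂ)) • y) = ((1:ℂ) - (c t : ℂ)) • star y := by
        rw [star_smul]
        congr 1
        simp [Complex.conj_ofReal]
      rw [this, smul_dotProduct, smul_eq_mul]
    have hne : (1:ℂ) - (c t : ℂ) ≠ 0 := by
      intro h
      have : ((c t : ℂ)) = 1 := by linear_combination -h
      exact absurd (by exact_mod_cast this) (ne_of_lt (hc1 t).2)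
    have := hcompute
    rw [hyv] at this
    exact (mul_eq_zero.mp this.symm).resolve_left hne
  -- bound on ‖w t‖ when 1 - c t ≤ ε/2
  have hwb : ∀ t, 1 - c t ≤ ε / 2 → ‖toE (w t)‖ ≤ 2 * ‖toE v‖ / ε := by
    intro t ht
    have h1 := hbd (w t) (horth t)
    have hsplit : ((1 : Matrix (Fin n) (Fin n) ℂ) + U).mulVec (w t)
        = v + ((1:ℂ) - (c t : ℂ)) • U.mulVec (w t) := by
      have hmat : (1 : Matrix (Fin n) (Fin n) ℂ) + U
          = (1 + (c t : ℂ) • U) + ((1:ℂ) - (c t : ℂ)) • U := by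
        module
      rw [hmat, Matrix.add_mulVec, hMw t, Matrix.smul_mulVec]
    have h2 : ‖toE (((1 : Matrix (Fin n) (Fin n) ℂ) + U).mulVec (w t))‖
        ≤ ‖toE v‖ + (1 - c t) * ‖toE (w t)‖ := by
      rw [hsplit]
      have he : toE (v + ((1:ℂ) - (c t : ℂ)) • U.mulVec (w t))
          = toE v + ((1:ℂ) - (c t : ℂ)) • toE (U.mulVec (w t)) := rfl
      rw [he]
      refine (norm_add_le _ _).trans ?_
      rw [norm_smul, norm_mulVec_unitary U hU]
      have : ‖(1:ℂ) - (c t : ℂ)‖ = 1 - c t := by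
        rw [show (1:ℂ) - (c t : ℂ) = ((1 - c t : ℝ) : ℂ) by push_cast; ring]
        rw [Complex.norm_real, Real.norm_eq_abs, abs_of_nonneg (by linarith [(hc1 t).2])]
      rw [this]
    have h3 : ε * ‖toE (w t)‖ ≤ ‖toE v‖ + (ε/2) * ‖toE (w t)‖ := by
      have : (1 - c t) * ‖toE (w t)‖ ≤ (ε/2) * ‖toE (w t)‖ :=
        mul_le_mul_of_nonneg_right ht (norm_nonneg _)
      linarith [h1.trans h2]
    rw [le_div_iff₀ hε]
    nlinarith [norm_nonneg (toE (w t))]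
  -- difference formula
  have hdiff : ∀ t, F t - v = ((c t : ℂ) - 1) • (((1 : Matrix (Fin n) (Fin n) ℂ) - U).mulVec (w t)) := by
    intro t
    have h1 : F t = ((c t : ℂ) • (1 : Matrix (Fin n) (Fin n) ℂ) + U).mulVec (w t) := by
      show ((c t • (1 : Matrix (Fin n) (Fin n) ℂ) + U) * (1 + c t • U)⁻¹).mulVec v = _
      rw [hsmul, hsmul, ← Matrix.mulVec_mulVec]
    have h2 : v = ((1 : Matrix (Fin n) (Fin n) ℂ) + (c t : ℂ) • U).mulVec (w t) := (hMw t).symm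
    rw [h1]
    conv_lhs => rw [h2]
    rw [← Matrix.sub_mulVec]
    have hmat : ((c t : ℂ) • (1 : Matrix (Fin n) (Fin n) ℂ) + U) - (1 + (c t : ℂ) • U)
        = ((c t : ℂ) - 1) • ((1 : Matrix (Fin n) (Fin n) ℂ) - U) := by
      module
    rw [hmat, Matrix.smul_mulVec]
  -- norm bound on difference
  have hnormdiff : ∀ t, 1 - c t ≤ ε / 2 →
      ‖toE (F t) - toE v‖ ≤ (1 - c t) * (4 * ‖toE v‖ / ε) := by
    intro t ht
    have he : toE (F t) - toE v = toE (F t - v) := rfl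
    rw [he, hdiff t]
    have he2 : toE (((c t : ℂ) - 1) • (((1 : Matrix (Fin n) (Fin n) ℂ) - U).mulVec (w t)))
        = ((c t : ℂ) - 1) • toE (((1 : Matrix (Fin n) (Fin n) ℂ) - U).mulVec (w t)) := rfl
    rw [he2, norm_smul]
    have h1 : ‖(c t : ℂ) - 1‖ = 1 - c t := by
      rw [show (c t : ℂ) - 1 = ((c t - 1 : ℝ) : ℂ) by push_cast; ring]
      rw [Complex.norm_real, Real.norm_eq_abs, abs_of_nonpos (by linarith [(hc1 t).2])]
      ring
    rw [h1]
    have h2 : ‖toE (((1 : Matrix (Fin n) (Fin n) ℂ) - U).mulVec (w t))‖ ≤ 2 * ‖toE (w t)‖ := by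
      rw [Matrix.sub_mulVec, Matrix.one_mulVec]
      have he3 : toE (w t - U.mulVec (w t)) = toE (w t) - toE (U.mulVec (w t)) := rfl
      rw [he3]
      refine (norm_sub_le _ _).trans ?_
      rw [norm_mulVec_unitary U hU]
      linarith
    have h3 := (hwb t ht)
    have hct : 0 ≤ 1 - c t := by linarith [(hc1 t).2]
    calc (1 - c t) * ‖toE (((1 : Matrix (Fin n) (Fin n) ℂ) - U).mulVec (w t))‖
        ≤ (1 - c t) * (2 * (2 * ‖toE v‖ / ε)) := by
          refine mul_le_mul_of_nonneg_left ?_ hct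
          calc ‖toE (((1 : Matrix (Fin n) (Fin n) ℂ) - U).mulVec (w t))‖
              ≤ 2 * ‖toE (w t)‖ := h2
            _ ≤ 2 * (2 * ‖toE v‖ / ε) := by linarith
      _ = (1 - c t) * (4 * ‖toE v‖ / ε) := by ring
  -- conclude in E
  have hE : Tendsto (fun t => toE (F t)) l (nhds (toE v)) := by
    rw [tendsto_iff_norm_sub_tendsto_zero]
    have hev : ∀ᶠ t in l, 1 - c t ≤ ε / 2 := by
      have : ∀ᶠ t in l, c t > 1 - ε/2 := hc2 (by
        apply Ioi_mem_nhds; linarith)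
      filter_upwards [this] with t ht
      linarith
    refine squeeze_zero' (Eventually.of_forall fun t => norm_nonneg _)
      (hev.mono fun t ht => hnormdiff t ht) ?_
    have : Tendsto (fun t => 1 - c t) l (nhds 0) := by
      have := (tendsto_const_nhds (x := (1:ℝ))).sub hc2
      simpa using this
    simpa using this.mul_const (4 * ‖toE v‖ / ε)
  -- transfer to Pi
  have hcont := (EuclideanSpace.equiv (Fin n) ℂ).continuous
  have := (hcont.tendsto (toE v)).comp hE
  exact this


lemma neg_unitary (U : Matrix (Fin n) (Fin n) ℂ)
    (hU : U ∈ Matrix.unitaryGroup (Fin n) ℂ) :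
    -U ∈ Matrix.unitaryGroup (Fin n) ℂ := by
  constructor
  · simpa using hU.1
  · simpa using hU.2

lemma phi_neg (s : ℝ) (U : Matrix (Fin n) (Fin n) ℂ) :
    (s • (1 : Matrix (Fin n) (Fin n) ℂ) + U) * (1 + s • U)⁻¹
      = -(((-s) • (1 : Matrix (Fin n) (Fin n) ℂ) + (-U)) * (1 + (-s) • (-U))⁻¹) := by
  have h1 : (1 : Matrix (Fin n) (Fin n) ℂ) + (-s) • (-U) = 1 + s • U := by module
  have h2 : (-s) • (1 : Matrix (Fin n) (Fin n) ℂ) + (-U)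
      = -(s • (1 : Matrix (Fin n) (Fin n) ℂ) + U) := by module
  rw [h1, h2, neg_mul, neg_neg]

end Aux

/-- For `φ(t,U) = (tanh(t)I + U)(I + tanh(t)U)⁻¹` with `U` unitary and any vector `v`:
if `(I + U)v = 0` then `φ(t,U)v → −v` as `t → ∞`; if `v ⟂ Ker(I + U)` then `φ(t,U)v → v`
as `t → ∞`. Dually, if `(I − U)v = 0` then `φ(t,U)v → v` as `t → −∞`, and if
`v ⟂ Ker(I − U)` then `φ(t,U)v → −v` as `t → −∞`. -/
theorem stmt9 (n : ℕ) (U : Matrix (Fin n) (Fin n) ℂ)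
    (hU : U ∈ Matrix.unitaryGroup (Fin n) ℂ)
    (φ : ℝ → Matrix (Fin n) (Fin n) ℂ)
    (hφ : ∀ t, φ t = (Real.tanh t • (1 : Matrix (Fin n) (Fin n) ℂ) + U) *
        (1 + Real.tanh t • U)⁻¹)
    (v : Fin n → ℂ) :
    (((1 : Matrix (Fin n) (Fin n) ℂ) + U).mulVec v = 0 →
      Tendsto (fun t => (φ t).mulVec v) atTop (nhds (-v))) ∧
    ((∀ w : Fin n → ℂ, ((1 : Matrix (Fin n) (Fin n) ℂ) + U).mulVec w = 0 →
        star v ⬝ᵥ w = 0) →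
      Tendsto (fun t => (φ t).mulVec v) atTop (nhds v)) ∧
    (((1 : Matrix (Fin n) (Fin n) ℂ) - U).mulVec v = 0 →
      Tendsto (fun t => (φ t).mulVec v) atBot (nhds v)) ∧
    ((∀ w : Fin n → ℂ, ((1 : Matrix (Fin n) (Fin n) ℂ) - U).mulVec w = 0 →
        star v ⬝ᵥ w = 0) →
      Tendsto (fun t => (φ t).mulVec v) atBot (nhds (-v))) := by
  have hU' := neg_unitary U hU
  have hc1' : ∀ t : ℝ, -Real.tanh t ∈ Set.Ioo (-1:ℝ) 1 := by
    intro t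
    have := auxTanh_mem t
    exact ⟨by linarith [this.2], by linarith [this.1]⟩
  refine ⟨?_, ?_, ?_, ?_⟩
  · intro h
    have heq : ∀ t : ℝ, (φ t).mulVec v = -v := by
      intro t
      rw [hφ]
      exact eigen_case U hU v h (auxTanh_mem t)
    exact tendsto_const_nhds.congr (fun t => (heq t).symm)
  · intro hv
    have := key_s9 U hU v hv auxTanh_mem auxTanh_top
    exact this.congr (fun t => by rw [hφ])
  · intro h
    have h' : ((1 : Matrix (Fin n) (Fin n) ℂ) + (-U)).mulVec v = 0 := by
      rwa [← sub_eq_add_neg]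
    have heq : ∀ t : ℝ, (φ t).mulVec v = v := by
      intro t
      rw [hφ, phi_neg, Matrix.neg_mulVec,
        eigen_case (-U) hU' v h' (hc1' t), neg_neg]
    exact tendsto_const_nhds.congr (fun t => (heq t).symm)
  · intro hv
    have hv' : ∀ w : Fin n → ℂ, ((1 : Matrix (Fin n) (Fin n) ℂ) + (-U)).mulVec w = 0 →
        star v ⬝ᵥ w = 0 := by
      intro w hw
      exact hv w (by rwa [sub_eq_add_neg])
    have hc2' : Tendsto (fun t : ℝ => -Real.tanh t) atBot (nhds 1) := by
      simpa using auxTanh_bot.neg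
    have hk := key_s9 (-U) hU' v hv' hc1' hc2'
    have := hk.neg
    refine this.congr (fun t => ?_)
    rw [hφ]
    conv_rhs => rw [phi_neg (Real.tanh t) U, Matrix.neg_mulVec]
end

section
/- Let A be an n×n self-adjoint complex matrix with eigenvalues λ_1 < ⋯ < λ_n, and define Φ(t,U₀) = (sinh(At) + cosh(At)U₀)(cosh(At) + sinh(At)U₀)⁻¹ for U₀ unitary. Then for all t for which cosh(At) + sinh(At)U₀ is invertible, Φ(t,U₀) is unitary, Φ(0,U₀) = U₀, and Φ satisfies ∂_t Φ = A − Φ A Φ, the gradient flow equation of f(U) = Re Tr(AU) on U(n). -/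
open Matrix NormedSpace

private theorem key_prod {R : Type*} [Ring R] (c s u v : R)
    (hcs : c * s = s * c) (h1 : c * c - s * s = 1) (hvu : v * u = 1) :
    (s + v * c) * (s + c * u) = (c + v * s) * (c + s * u) := by
  have expand : (s + v * c) * (s + c * u) - (c + v * s) * (c + s * u)
      = (s * s - c * c) + (s * c - c * s) * u + v * (c * s - s * c)
        + v * ((c * c - s * s) * u) := by noncomm_ring
  have h2 : s * s - c * c = -1 := by rw [← neg_sub, h1]
  have h3 : (s + v * c) * (s + c * u) - (c + v * s) * (c + s * u) = 0 := by
    rw [expand, hcs, sub_self, zero_mul, mul_zero, h1, one_mul, hvu, h2]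
    abel
  exact sub_eq_zero.mp h3

private theorem cs_ops {R : Type*} [Ring R] [Algebra ℂ R] {e f : R}
    (hef : e * f = 1) (hfe : f * e = 1) :
    (((1:ℂ)/2) • (e + f)) * (((1:ℂ)/2) • (e - f))
      = (((1:ℂ)/2) • (e - f)) * (((1:ℂ)/2) • (e + f)) ∧
    (((1:ℂ)/2) • (e + f)) * (((1:ℂ)/2) • (e + f))
      - (((1:ℂ)/2) • (e - f)) * (((1:ℂ)/2) • (e - f)) = 1 := by
  constructor
  · rw [smul_mul_smul_comm, smul_mul_smul_comm]
    congr 1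
    have h1 : (e + f) * (e - f) = e*e - f*f + (f*e - e*f) := by noncomm_ring
    have h2 : (e - f) * (e + f) = e*e - f*f + (e*f - f*e) := by noncomm_ring
    rw [h1, h2, hef, hfe]
  · rw [smul_mul_smul_comm, smul_mul_smul_comm, ← smul_sub]
    have h1 : (e+f)*(e+f) - (e-f)*(e-f) = 2*(e*f) + 2*(f*e) := by noncomm_ring
    rw [h1, hef, hfe, mul_one]
    have h4 : ((2:R) + 2) = (4:ℂ) • (1:R) := by
      rw [← Algebra.algebraMap_eq_smul_one, map_ofNat]
      norm_num
    rw [h4, smul_smul]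
    norm_num

/-- Let `A` be an `n×n` self-adjoint matrix with eigenvalues `λ_1 < ⋯ < λ_n`, and define
`Φ(t,U₀) = (sinh(At) + cosh(At)U₀)(cosh(At) + sinh(At)U₀)⁻¹` for `U₀` unitary. Then for all
`t` for which `cosh(At) + sinh(At)U₀` is invertible, `Φ(t,U₀)` is unitary; `Φ(0,U₀) = U₀`;
and `Φ` satisfies `∂_t Φ = A − Φ A Φ`, the gradient flow equation of `f(U) = Re Tr(AU)`. -/
theorem stmt10 (n : ℕ) (A : Matrix (Fin n) (Fin n) ℂ) (hA : A.IsHermitian)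
    (lam : Fin n → ℝ) (hlam : StrictMono lam)
    (hspec : spectrum ℂ A = Set.range fun i => (lam i : ℂ))
    (U₀ : Matrix (Fin n) (Fin n) ℂ) (hU₀ : U₀ ∈ Matrix.unitaryGroup (Fin n) ℂ)
    (C S Φ : ℝ → Matrix (Fin n) (Fin n) ℂ)
    (hC : ∀ t, C t = ((1 : ℂ) / 2) •
        (NormedSpace.exp ((t : ℂ) • A) + NormedSpace.exp (-((t : ℂ) • A))))
    (hS : ∀ t, S t = ((1 : ℂ) / 2) •
        (NormedSpace.exp ((t : ℂ) • A) - NormedSpace.exp (-((t : ℂ) • A))))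
    (hΦ : ∀ t, Φ t = (S t + C t * U₀) * (C t + S t * U₀)⁻¹) :
    (∀ t : ℝ, IsUnit (C t + S t * U₀) → Φ t ∈ Matrix.unitaryGroup (Fin n) ℂ) ∧
    Φ 0 = U₀ ∧
    (∀ t : ℝ, IsUnit (C t + S t * U₀) →
      ∀ i j : Fin n, HasDerivAt (fun s => Φ s i j) ((A - Φ t * A * Φ t) i j) t) := by
  letI : SeminormedRing (Matrix (Fin n) (Fin n) ℂ) := Matrix.linftyOpSemiNormedRing
  letI : NormedRing (Matrix (Fin n) (Fin n) ℂ) := Matrix.linftyOpNormedRing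
  letI : NormedAlgebra ℝ (Matrix (Fin n) (Fin n) ℂ) := Matrix.linftyOpNormedAlgebra
  letI : NormedAlgebra ℂ (Matrix (Fin n) (Fin n) ℂ) := Matrix.linftyOpNormedAlgebra
  letI : CompleteSpace (Matrix (Fin n) (Fin n) ℂ) := FiniteDimensional.complete ℝ _
  have hU' : star U₀ * U₀ = 1 := Matrix.mem_unitaryGroup_iff'.mp hU₀
  -- basic exponential facts
  have hef : ∀ t : ℝ, exp ((t:ℂ) • A) * exp (-((t:ℂ) • A)) = 1 := by
    intro t
    rw [← Matrix.exp_add_of_commute _ _ ((Commute.refl ((t:ℂ) • A)).neg_right), add_neg_cancel, exp_zero]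
  have hfe : ∀ t : ℝ, exp (-((t:ℂ) • A)) * exp ((t:ℂ) • A) = 1 := by
    intro t
    rw [← Matrix.exp_add_of_commute _ _ ((Commute.refl ((t:ℂ) • A)).neg_left), neg_add_cancel, exp_zero]
  have hsmulH : ∀ t : ℝ, ((t:ℂ) • A)ᴴ = (t:ℂ) • A := by
    intro t
    rw [conjTranspose_smul, hA.eq]
    simp
  have hstarE : ∀ t : ℝ, star (exp ((t:ℂ) • A)) = exp ((t:ℂ) • A) := by
    intro t
    rw [Matrix.star_eq_conjTranspose, ← Matrix.exp_conjTranspose, hsmulH]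
  have hstarF : ∀ t : ℝ, star (exp (-((t:ℂ) • A))) = exp (-((t:ℂ) • A)) := by
    intro t
    rw [Matrix.star_eq_conjTranspose, ← Matrix.exp_conjTranspose, conjTranspose_neg, hsmulH]
  have hstarC : ∀ t : ℝ, star (C t) = C t := by
    intro t
    rw [hC, star_smul, star_add, hstarE, hstarF]
    norm_num
  have hstarS : ∀ t : ℝ, star (S t) = S t := by
    intro t
    rw [hS, star_smul, star_sub, hstarE, hstarF]
    norm_num
  have hcs : ∀ t : ℝ, C t * S t = S t * C t := by
    intro t; rw [hC, hS]; exact (cs_ops (hef t) (hfe t)).1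
  have h1 : ∀ t : ℝ, C t * C t - S t * S t = 1 := by
    intro t; rw [hC, hS]; exact (cs_ops (hef t) (hfe t)).2
  -- the key algebraic identity for unitarity
  have key : ∀ t : ℝ, star (S t + C t * U₀) * (S t + C t * U₀)
      = star (C t + S t * U₀) * (C t + S t * U₀) := by
    intro t
    have h := key_prod (C t) (S t) U₀ (star U₀) (hcs t) (h1 t) hU'
    calc star (S t + C t * U₀) * (S t + C t * U₀)
        = (S t + star U₀ * C t) * (S t + C t * U₀) := by
          rw [star_add, Matrix.star_mul, hstarS, hstarC]
      _ = (C t + star U₀ * S t) * (C t + S t * U₀) := h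
      _ = star (C t + S t * U₀) * (C t + S t * U₀) := by
          rw [star_add, Matrix.star_mul, hstarS, hstarC]
  refine ⟨?_, ?_, ?_⟩
  · -- unitarity
    intro t ht
    have hdet : IsUnit (C t + S t * U₀).det := (Matrix.isUnit_iff_isUnit_det _).mp ht
    have hdet' : IsUnit (star (C t + S t * U₀)).det := by
      rw [Matrix.star_eq_conjTranspose, Matrix.det_conjTranspose]
      exact hdet.star
    rw [Matrix.mem_unitaryGroup_iff', hΦ t]
    have hsi : star ((C t + S t * U₀)⁻¹) = (star (C t + S t * U₀))⁻¹ := by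
      simp only [Matrix.star_eq_conjTranspose]
      exact Matrix.conjTranspose_nonsing_inv _
    rw [Matrix.star_mul, hsi]
    calc (star (C t + S t * U₀))⁻¹ * star (S t + C t * U₀)
          * ((S t + C t * U₀) * (C t + S t * U₀)⁻¹)
        = (star (C t + S t * U₀))⁻¹
            * ((star (S t + C t * U₀) * (S t + C t * U₀)) * (C t + S t * U₀)⁻¹) := by
          simp only [mul_assoc]
      _ = (star (C t + S t * U₀))⁻¹
            * (star (C t + S t * U₀) * ((C t + S t * U₀) * (C t + S t * U₀)⁻¹)) := by
          rw [key t, mul_assoc]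
      _ = (star (C t + S t * U₀))⁻¹ * star (C t + S t * U₀) := by
          rw [Matrix.mul_nonsing_inv _ hdet, mul_one]
      _ = 1 := Matrix.nonsing_inv_mul _ hdet'
  · -- value at 0
    have hC0 : C 0 = 1 := by
      rw [hC]
      simp only [Complex.ofReal_zero, zero_smul, neg_zero, exp_zero]
      rw [← two_smul ℂ (1 : Matrix (Fin n) (Fin n) ℂ), smul_smul]
      norm_num
    have hS0 : S 0 = 0 := by
      rw [hS]
      simp [Complex.ofReal_zero]
    rw [hΦ 0, hC0, hS0]
    simp
  · -- the differential equation
    intro t ht i j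
    have hdet : IsUnit (C t + S t * U₀).det := (Matrix.isUnit_iff_isUnit_det _).mp ht
    -- derivatives of the two exponentials
    have hconv : ∀ B : Matrix (Fin n) (Fin n) ℂ,
        (fun u : ℝ => exp (u • B)) = fun u : ℝ => exp ((u:ℂ) • B) := by
      intro B; funext u; rw [Complex.coe_smul]
    have hconv2 : ∀ (B : Matrix (Fin n) (Fin n) ℂ) (u : ℝ),
        exp (u • B) = exp ((u:ℂ) • B) := fun B u => congrFun (hconv B) u
    have hEd : HasDerivAt (fun s : ℝ => exp ((s:ℂ) • A)) (A * exp ((t:ℂ) • A)) t := by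
      have h := hasDerivAt_exp_smul_const' (𝕂 := ℝ) A t
      refine (h.congr_of_eventuallyEq (Filter.Eventually.of_forall fun u => (hconv2 A u).symm)).congr_deriv ?_
      exact congrArg _ (hconv2 A t)
    have hFd : HasDerivAt (fun s : ℝ => exp (-((s:ℂ) • A)))
        (-(A * exp (-((t:ℂ) • A)))) t := by
      have h := hasDerivAt_exp_smul_const' (𝕂 := ℝ) (-A) t
      replace h := (h.congr_of_eventuallyEq (Filter.Eventually.of_forall fun u => (hconv2 (-A) u).symm)).congr_deriv (congrArg _ (hconv2 (-A) t))
      simp only [smul_neg] at h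
      simp only [neg_mul] at h
      exact h
    have hCd : HasDerivAt C (A * S t) t := by
      have h := (hEd.add hFd).const_smul ((1:ℂ)/2)
      have hfun : (fun s : ℝ => ((1:ℂ)/2) • (exp ((s:ℂ) • A) + exp (-((s:ℂ) • A)))) = C :=
        (funext hC).symm
      rw [← hfun]
      refine h.congr_deriv (Eq.symm ?_)
      rw [hS, mul_smul_comm, mul_sub, sub_eq_add_neg]
    have hSd : HasDerivAt S (A * C t) t := by
      have h := (hEd.sub hFd).const_smul ((1:ℂ)/2)
      have hfun : (fun s : ℝ => ((1:ℂ)/2) • (exp ((s:ℂ) • A) - exp (-((s:ℂ) • A)))) = S :=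
        (funext hS).symm
      rw [← hfun]
      refine h.congr_deriv (Eq.symm ?_)
      rw [hC, mul_smul_comm, mul_add, sub_neg_eq_add]
    have hMd : HasDerivAt (fun s => C s + S s * U₀) (A * (S t + C t * U₀)) t := by
      have h := hCd.add (hSd.mul_const U₀)
      refine h.congr_deriv (Eq.symm ?_)
      rw [mul_add, ← mul_assoc]
    have hNd : HasDerivAt (fun s => S s + C s * U₀) (A * (C t + S t * U₀)) t := by
      have h := hSd.add (hCd.mul_const U₀)
      refine h.congr_deriv (Eq.symm ?_)
      rw [mul_add, ← mul_assoc]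
    -- derivative of the inverse
    have hinv : HasDerivAt (fun s => (C s + S s * U₀)⁻¹)
        (-((C t + S t * U₀)⁻¹ * (A * (S t + C t * U₀)) * (C t + S t * U₀)⁻¹)) t := by
      have hfd : HasFDerivAt Ring.inverse
          (-ContinuousLinearMap.mulLeftRight ℝ _ ↑ht.unit⁻¹ ↑ht.unit⁻¹)
          ((fun s => C s + S s * U₀) t) := by
        simpa only [ht.unit_spec] using hasFDerivAt_ringInverse (𝕜 := ℝ) ht.unit
      have h := hfd.comp_hasDerivAt t hMd
      have hfun : (fun s => Ring.inverse (C s + S s * U₀)) = fun s => (C s + S s * U₀)⁻¹ := by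
        funext s; rw [Matrix.nonsing_inv_eq_ringInverse]
      have hval : (↑ht.unit⁻¹ : Matrix (Fin n) (Fin n) ℂ) = (C t + S t * U₀)⁻¹ := by
        rw [Matrix.coe_units_inv, ht.unit_spec]
      simp only [Function.comp_def, hfun, ContinuousLinearMap.neg_apply,
        ContinuousLinearMap.mulLeftRight_apply, hval] at h
      exact h
    -- product rule
    have hΦd : HasDerivAt (fun s => (S s + C s * U₀) * (C s + S s * U₀)⁻¹)
        ((A - Φ t * A * Φ t)) t := by
      have h := hNd.mul hinv
      refine h.congr_deriv (Eq.symm ?_)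
      have expand : A * (C t + S t * U₀) * (C t + S t * U₀)⁻¹
            + (S t + C t * U₀)
              * -((C t + S t * U₀)⁻¹ * (A * (S t + C t * U₀)) * (C t + S t * U₀)⁻¹)
          = A * ((C t + S t * U₀) * (C t + S t * U₀)⁻¹)
            - ((S t + C t * U₀) * (C t + S t * U₀)⁻¹) * A
              * ((S t + C t * U₀) * (C t + S t * U₀)⁻¹) := by
        noncomm_ring
      rw [expand, Matrix.mul_nonsing_inv _ hdet, mul_one, ← hΦ t]
    have hΦd' : HasDerivAt (fun s => Φ s) ((A - Φ t * A * Φ t)) t := by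
      have hfun : (fun s => (S s + C s * U₀) * (C s + S s * U₀)⁻¹) = fun s => Φ s :=
        funext fun s => (hΦ s).symm
      rwa [hfun] at hΦd
    -- pass to entries via the continuous linear entry map
    obtain ⟨L, hL⟩ : ∃ L : Matrix (Fin n) (Fin n) ℂ →L[ℝ] ℂ, ∀ M, L M = M i j := by
      refine ⟨LinearMap.mkContinuous
        { toFun := fun M => M i j, map_add' := fun _ _ => rfl,
          map_smul' := fun _ _ => rfl } 1 (fun M => ?_), fun M => rfl⟩
      rw [one_mul]
      show ‖M i j‖ ≤ ‖M‖
      rw [← coe_nnnorm, ← coe_nnnorm, NNReal.coe_le_coe]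
      calc ‖M i j‖₊ ≤ ∑ j', ‖M i j'‖₊ :=
            Finset.single_le_sum (f := fun j' => ‖M i j'‖₊)
              (fun _ _ => zero_le) (Finset.mem_univ j)
        _ ≤ ‖M‖₊ := by
            rw [Matrix.linfty_opNNNorm_def]
            exact Finset.le_sup (f := fun i => ∑ j', ‖M i j'‖₊) (Finset.mem_univ i)
    have h := L.hasFDerivAt.comp_hasDerivAt t hΦd'
    rw [← hL (A - Φ t * A * Φ t)]
    exact h.congr_of_eventuallyEq (Filter.Eventually.of_forall fun s => (hL (Φ s)).symm)
end
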